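/- Fundamental Theorem for translationally invariant injective MPS: Let A and B be injective MPS tensors (matrices A^i, B^i ∈ Mat(D), respectively Mat(D')) generating the same translationally invariant state on n ≥ 3 sites: ∑ Tr(A^{i₁}⋯A^{i_n})|i₁…i_n⟩ = ∑ Tr(B^{i₁}⋯B^{i_n})|i₁…i_n⟩. Then D = D' and there exist an invertible matrix Z and a scalar λ with λⁿ = 1 such that B^i = λ Z⁻¹ A^i Z for all i; Z is unique up to a multiplicative constant. -/

import Mathlib

open Matrix Pointwise

section Aux

lemma trace_nondeg {p : ℕ} (P Q : Matrix (Fin p) (Fin p) ℂ)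
    (h : ∀ N : Matrix (Fin p) (Fin p) ℂ, (P * N).trace = (Q * N).trace) : P = Q := by
  ext a b
  have := h (Matrix.single b a 1)
  simpa [Matrix.trace, Matrix.diag, Matrix.mul_apply, Matrix.single,
    ite_and, Finset.sum_ite_eq, Finset.sum_ite_eq'] using this

lemma smul_std {p : ℕ} (x y : Fin p) (c : ℂ) :
    Matrix.single x y c = c • Matrix.single x y 1 := by
  ext a b
  simp [Matrix.single, Matrix.smul_apply, mul_ite]

lemma span_eq_top_of_inj {d D : ℕ} {A : Fin d → Matrix (Fin D) (Fin D) ℂ}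
    (hA : Function.Injective fun X : Matrix (Fin D) (Fin D) ℂ =>
      fun i : Fin d => (A i * Xᵀ).trace) :
    Submodule.span ℂ (Set.range A) = ⊤ := by
  by_contra h
  obtain ⟨f, hf0, hf⟩ := Submodule.exists_dual_map_eq_bot_of_lt_top
    (lt_top_iff_ne_top.2 h) inferInstance
  set X : Matrix (Fin D) (Fin D) ℂ := Matrix.of fun a b => f (Matrix.single a b 1) with hX
  have key : ∀ M : Matrix (Fin D) (Fin D) ℂ, (M * Xᵀ).trace = f M := by
    intro M
    calc (M * Xᵀ).trace = ∑ a : Fin D, ∑ b : Fin D, M a b * f (Matrix.single a b 1) := by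
          simp [Matrix.trace, Matrix.diag, Matrix.mul_apply, Matrix.transpose_apply, hX]
      _ = f M := by
          conv_rhs => rw [Matrix.matrix_eq_sum_single M]
          rw [map_sum]
          refine Finset.sum_congr rfl fun a _ => ?_
          rw [map_sum]
          refine Finset.sum_congr rfl fun b _ => ?_
          rw [smul_std a b (M a b), _root_.map_smul, smul_eq_mul]
  have hzero : ∀ i, f (A i) = 0 := by
    intro i
    have hmem : A i ∈ Submodule.span ℂ (Set.range A) := Submodule.subset_span ⟨i, rfl⟩
    have := hf ▸ Submodule.mem_map_of_mem (f := f) hmem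
    simpa using this
  have hX0 : X = 0 := by
    apply hA
    funext i
    simp [key, hzero i]
  apply hf0
  ext M
  rw [← key M, hX0]
  simp

lemma ofFn_cons {k : ℕ} {α : Type*} (x : α) (f : Fin k → α) :
    List.ofFn (Fin.cons x f) = x :: List.ofFn f := by
  rw [List.ofFn_succ]
  simp

lemma span_prods {d D : ℕ} {B : Fin d → Matrix (Fin D) (Fin D) ℂ}
    (hB : Submodule.span ℂ (Set.range B) = ⊤) :
    ∀ k : ℕ, Submodule.span ℂ {M : Matrix (Fin D) (Fin D) ℂ |
      ∃ f : Fin (k+1) → Fin d, M = (List.ofFn fun j => B (f j)).prod} = ⊤ := by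
  intro k
  induction k with
  | zero =>
    rw [← hB]
    congr 1
    ext M
    constructor
    · rintro ⟨f, rfl⟩; exact ⟨f 0, by simp [List.ofFn_succ]⟩
    · rintro ⟨i, rfl⟩; exact ⟨fun _ => i, by simp [List.ofFn_succ]⟩
  | succ k ih =>
    have hset : {M : Matrix (Fin D) (Fin D) ℂ |
        ∃ f : Fin (k+2) → Fin d, M = (List.ofFn fun j => B (f j)).prod}
        = (Set.range B) * {M : Matrix (Fin D) (Fin D) ℂ |
            ∃ f : Fin (k+1) → Fin d, M = (List.ofFn fun j => B (f j)).prod} := by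
      ext M
      constructor
      · rintro ⟨f, rfl⟩
        refine ⟨B (f 0), ⟨f 0, rfl⟩, (List.ofFn fun j : Fin (k+1) => B (f j.succ)).prod,
          ⟨fun j => f j.succ, rfl⟩, ?_⟩
        rw [List.ofFn_succ]
        simp
      · rintro ⟨x, ⟨i, rfl⟩, y, ⟨f, rfl⟩, rfl⟩
        refine ⟨Fin.cons (α := fun _ : Fin (k+2) => Fin d) i f, ?_⟩
        have : (fun j : Fin (k+2) => B (Fin.cons (α := fun _ : Fin (k+2) => Fin d) i f j)) = Fin.cons (α := fun _ : Fin (k+2) => Matrix (Fin D) (Fin D) ℂ) (B i) (fun j => B (f j)) := by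
          funext j
          refine Fin.cases ?_ (fun j => ?_) j <;> simp
        rw [this, ofFn_cons]
        simp
    rw [hset, ← Submodule.span_mul_span, hB, ih]
    refine le_antisymm le_top fun x _ => ?_
    simpa using Submodule.mul_mem_mul (Submodule.mem_top (x := x)) (Submodule.mem_top (x := (1 : Matrix (Fin D) (Fin D) ℂ)))

lemma key_ker {d m Da Db : ℕ} (A : Fin d → Matrix (Fin Da) (Fin Da) ℂ)
    (B : Fin d → Matrix (Fin Db) (Fin Db) ℂ)
    (hBspan : Submodule.span ℂ (Set.range B) = ⊤)
    (hstate : ∀ i : Fin (m+3) → Fin d,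
      ((List.ofFn fun k => A (i k)).prod).trace = ((List.ofFn fun k => B (i k)).prod).trace)
    (c : Fin d → ℂ) (hc : ∑ i, c i • A i = 0) : ∑ i, c i • B i = 0 := by
  set P := ∑ i, c i • B i with hP
  have key : ∀ N, (P * N).trace = ((0 : Matrix (Fin Db) (Fin Db) ℂ) * N).trace := by
    have hspan := span_prods hBspan (m+1)
    -- the functional N ↦ (P*N).trace vanishes on the generating set
    set ℓ : Matrix (Fin Db) (Fin Db) ℂ →ₗ[ℂ] ℂ :=
      (Matrix.traceLinearMap (Fin Db) ℂ ℂ) ∘ₗ (LinearMap.mulLeft ℂ P) with hℓ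
    have hgen : ∀ N ∈ {M : Matrix (Fin Db) (Fin Db) ℂ |
        ∃ f : Fin (m+2) → Fin d, M = (List.ofFn fun j => B (f j)).prod}, ℓ N = 0 := by
      rintro N ⟨f, rfl⟩
      simp only [hℓ, LinearMap.comp_apply, LinearMap.mulLeft_apply, Matrix.traceLinearMap_apply]
      calc (P * (List.ofFn fun j => B (f j)).prod).trace
          = ∑ i, c i * ((List.ofFn fun k => B (Fin.cons (α := fun _ : Fin (m+3) => Fin d) i f k)).prod).trace := by
            rw [hP, Finset.sum_mul, Matrix.trace_sum]
            refine Finset.sum_congr rfl fun i _ => ?_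
            rw [smul_mul_assoc, Matrix.trace_smul, smul_eq_mul]
            congr 2
            have hfe : (fun k : Fin (m+3) => B (Fin.cons (α := fun _ : Fin (m+3) => Fin d) i f k))
                = Fin.cons (α := fun _ : Fin (m+3) => Matrix (Fin Db) (Fin Db) ℂ) (B i) (fun k => B (f k)) := by
              funext j
              refine Fin.cases ?_ (fun j => ?_) j <;> simp
            rw [hfe, ofFn_cons, List.prod_cons]
        _ = ∑ i, c i * (A i * (List.ofFn fun j => A (f j)).prod).trace := by
            refine Finset.sum_congr rfl fun i _ => ?_
            congr 1
            rw [← hstate (Fin.cons (α := fun _ : Fin (m+3) => Fin d) i f)]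
            congr 1
            have hfe : (fun k : Fin (m+3) => A (Fin.cons (α := fun _ : Fin (m+3) => Fin d) i f k))
                = Fin.cons (α := fun _ : Fin (m+3) => Matrix (Fin Da) (Fin Da) ℂ) (A i) (fun k => A (f k)) := by
              funext j
              refine Fin.cases ?_ (fun j => ?_) j <;> simp
            rw [hfe, ofFn_cons, List.prod_cons]
        _ = ((∑ i, c i • A i) * (List.ofFn fun j => A (f j)).prod).trace := by
            rw [Finset.sum_mul, Matrix.trace_sum]
            refine Finset.sum_congr rfl fun i _ => ?_
            rw [smul_mul_assoc, Matrix.trace_smul, smul_eq_mul]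
        _ = 0 := by rw [hc, Matrix.zero_mul, Matrix.trace_zero]
    have hle : Submodule.span ℂ {M : Matrix (Fin Db) (Fin Db) ℂ |
        ∃ f : Fin (m+2) → Fin d, M = (List.ofFn fun j => B (f j)).prod} ≤ LinearMap.ker ℓ :=
      Submodule.span_le.2 fun N hN => LinearMap.mem_ker.2 (hgen N hN)
    intro N
    have : ℓ N = 0 := hle (hspan ▸ Submodule.mem_top) 
    simpa [hℓ] using this
  have := trace_nondeg P 0 key
  simpa using this


lemma comp_cons {k : ℕ} {α β : Type*} (g : α → β) (x : α) (f : Fin k → α) :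
    (fun j => g (Fin.cons (α := fun _ : Fin (k+1) => α) x f j))
      = Fin.cons (α := fun _ : Fin (k+1) => β) (g x) (fun j => g (f j)) := by
  funext j; refine Fin.cases ?_ (fun j => ?_) j <;> simp

lemma central_scalar {p : ℕ} (G : Matrix (Fin p) (Fin p) ℂ)
    (h : ∀ X : Matrix (Fin p) (Fin p) ℂ, X * G = G * X) : ∃ μ : ℂ, G = μ • 1 := by
  obtain ⟨r, hr⟩ := Matrix.mem_range_scalar_of_commute_single
    (M := G) (fun i j _ => h _)
  refine ⟨r, ?_⟩
  rw [← hr, Matrix.scalar_apply, Matrix.smul_one_eq_diagonal]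
lemma exists_phi {d m Da Db : ℕ} (A : Fin d → Matrix (Fin Da) (Fin Da) ℂ)
    (B : Fin d → Matrix (Fin Db) (Fin Db) ℂ)
    (hAspan : Submodule.span ℂ (Set.range A) = ⊤)
    (hBspan : Submodule.span ℂ (Set.range B) = ⊤)
    (hstate : ∀ i : Fin (m+3) → Fin d,
      ((List.ofFn fun k => A (i k)).prod).trace = ((List.ofFn fun k => B (i k)).prod).trace) :
    ∃ Φ : Matrix (Fin Da) (Fin Da) ℂ →ₗ[ℂ] Matrix (Fin Db) (Fin Db) ℂ, ∀ i, Φ (A i) = B i := by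
  set α := Fintype.linearCombination ℂ A with hα
  set β := Fintype.linearCombination ℂ B with hβ
  have hαsurj : LinearMap.range α = ⊤ := by
    rw [hα, Fintype.range_linearCombination, hAspan]
  obtain ⟨σ, hσ⟩ := α.exists_rightInverse_of_surjective hαsurj
  refine ⟨β ∘ₗ σ, fun i => ?_⟩
  have h1 : α (σ (A i)) = A i := by
    have := congrArg (fun g => g (A i)) hσ
    simpa using this
  have h2 : α (Pi.single i 1) = A i := by
    rw [hα]; simp
  set c : Fin d → ℂ := σ (A i) - Pi.single i 1 with hcdef
  have hker : ∑ j, c j • A j = 0 := by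
    have : α c = 0 := by rw [hcdef, map_sub, h1, h2, sub_self]
    rw [hα] at this
    simpa [Fintype.linearCombination_apply] using this
  have hkerB := key_ker A B hBspan hstate _ hker
  have : β c = 0 := by
    rw [hβ]
    simpa [Fintype.linearCombination_apply] using hkerB
  have h3 : β (σ (A i)) = β (Pi.single i 1) := by
    have h4 : β (σ (A i)) - β (Pi.single i 1) = 0 := by rw [← map_sub, ← hcdef]; exact this
    exact sub_eq_zero.mp h4
  rw [LinearMap.comp_apply, h3, hβ]
  simp
lemma trace_identity {n d Da Db : ℕ} (A : Fin d → Matrix (Fin Da) (Fin Da) ℂ)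
    (B : Fin d → Matrix (Fin Db) (Fin Db) ℂ)
    (Φ : Matrix (Fin Da) (Fin Da) ℂ →ₗ[ℂ] Matrix (Fin Db) (Fin Db) ℂ)
    (hAspan : Submodule.span ℂ (Set.range A) = ⊤)
    (hΦ : ∀ i, Φ (A i) = B i)
    (hstate : ∀ i : Fin n → Fin d,
      ((List.ofFn fun k => A (i k)).prod).trace = ((List.ofFn fun k => B (i k)).prod).trace) :
    ∀ M : Fin n → Matrix (Fin Da) (Fin Da) ℂ,
      ((List.ofFn fun k => Φ (M k)).prod).trace = ((List.ofFn M).prod).trace := by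
  obtain ⟨s, hsub, hs_span, hs_li⟩ := exists_linearIndependent ℂ (Set.range A)
  rw [hAspan] at hs_span
  let bas : Module.Basis s ℂ (Matrix (Fin Da) (Fin Da) ℂ) :=
    Module.Basis.mk hs_li (by rw [Subtype.range_coe]; exact hs_span.ge)
  have hchoose := fun x : s => hsub x.2
  choose idx hidx using hchoose
  set f : MultilinearMap ℂ (fun _ : Fin n => Matrix (Fin Da) (Fin Da) ℂ) ℂ :=
    (Matrix.traceLinearMap (Fin Da) ℂ ℂ).compMultilinearMap
      (MultilinearMap.mkPiAlgebraFin ℂ n _) with hf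
  set g : MultilinearMap ℂ (fun _ : Fin n => Matrix (Fin Da) (Fin Da) ℂ) ℂ :=
    ((Matrix.traceLinearMap (Fin Db) ℂ ℂ).compMultilinearMap
      (MultilinearMap.mkPiAlgebraFin ℂ n _)).compLinearMap (fun _ => Φ) with hg
  have hfg : g = f := by
    apply Module.Basis.ext_multilinear (fun _ => bas)
    intro v
    have hb : ∀ k, bas (v k) = A (idx (v k)) := by
      intro k
      rw [Module.Basis.mk_apply, hidx]
    simp only [hf, hg, MultilinearMap.compLinearMap_apply, LinearMap.compMultilinearMap_apply,
      MultilinearMap.mkPiAlgebraFin_apply, Matrix.traceLinearMap_apply, hb, hΦ]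
    exact (hstate fun k => idx (v k)).symm
  intro M
  have := DFunLike.congr_fun hfg M
  simpa [hf, hg, MultilinearMap.compLinearMap_apply, LinearMap.compMultilinearMap_apply,
    MultilinearMap.mkPiAlgebraFin_apply] using this
lemma phi_mul {d m Da Db : ℕ} (A : Fin d → Matrix (Fin Da) (Fin Da) ℂ)
    (B : Fin d → Matrix (Fin Db) (Fin Db) ℂ)
    (Φ : Matrix (Fin Da) (Fin Da) ℂ →ₗ[ℂ] Matrix (Fin Db) (Fin Db) ℂ)
    (hBspan : Submodule.span ℂ (Set.range B) = ⊤)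
    (hΦ : ∀ i, Φ (A i) = B i)
    (tid : ∀ M : Fin (m+3) → Matrix (Fin Da) (Fin Da) ℂ,
      ((List.ofFn fun k => Φ (M k)).prod).trace = ((List.ofFn M).prod).trace)
    (X Y : Matrix (Fin Da) (Fin Da) ℂ) :
    Φ X * Φ Y = Φ (X * Y) * Φ 1 := by
  apply trace_nondeg
  -- the functional N ↦ ((Φ X * Φ Y) * N).trace - ((Φ (X*Y) * Φ 1) * N).trace
  set ℓ : Matrix (Fin Db) (Fin Db) ℂ →ₗ[ℂ] ℂ :=
    (Matrix.traceLinearMap (Fin Db) ℂ ℂ) ∘ₗ (LinearMap.mulLeft ℂ (Φ X * Φ Y - Φ (X * Y) * Φ 1))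
    with hℓ
  have hgen : ∀ N ∈ {M : Matrix (Fin Db) (Fin Db) ℂ |
      ∃ f : Fin (m+1) → Fin d, M = (List.ofFn fun j => B (f j)).prod}, ℓ N = 0 := by
    rintro N ⟨f, rfl⟩
    simp only [hℓ, LinearMap.comp_apply, LinearMap.mulLeft_apply, Matrix.traceLinearMap_apply,
      sub_mul, Matrix.trace_sub]
    rw [sub_eq_zero]
    set R : Fin (m+1) → Matrix (Fin Da) (Fin Da) ℂ := fun j => A (f j) with hR
    have hΦR : (fun j => Φ (R j)) = fun j => B (f j) := by
      funext j; rw [hR, hΦ]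
    set M1 : Fin (m+3) → Matrix (Fin Da) (Fin Da) ℂ :=
      Fin.cons (α := fun _ : Fin (m+3) => Matrix (Fin Da) (Fin Da) ℂ) X
        (Fin.cons (α := fun _ : Fin (m+2) => Matrix (Fin Da) (Fin Da) ℂ) Y R) with hM1
    set M2 : Fin (m+3) → Matrix (Fin Da) (Fin Da) ℂ :=
      Fin.cons (α := fun _ : Fin (m+3) => Matrix (Fin Da) (Fin Da) ℂ) (X * Y)
        (Fin.cons (α := fun _ : Fin (m+2) => Matrix (Fin Da) (Fin Da) ℂ) 1 R) with hM2
    have t1 := tid M1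
    have t2 := tid M2
    rw [hM1] at t1
    rw [hM2] at t2
    rw [comp_cons Φ X, comp_cons Φ Y, hΦR] at t1
    rw [comp_cons Φ (X * Y), comp_cons Φ 1, hΦR] at t2
    rw [ofFn_cons, ofFn_cons, ofFn_cons, ofFn_cons, List.prod_cons, List.prod_cons,
      List.prod_cons, List.prod_cons] at t1
    rw [ofFn_cons, ofFn_cons, ofFn_cons, ofFn_cons, List.prod_cons, List.prod_cons,
      List.prod_cons, List.prod_cons] at t2
    calc (Φ X * Φ Y * (List.ofFn fun j => B (f j)).prod).trace
        = (Φ X * (Φ Y * (List.ofFn fun j => B (f j)).prod)).trace := by rw [Matrix.mul_assoc]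
      _ = (X * (Y * (List.ofFn R).prod)).trace := t1
      _ = (X * Y * (1 * (List.ofFn R).prod)).trace := by
          rw [Matrix.one_mul, ← Matrix.mul_assoc]
      _ = (Φ (X * Y) * (Φ 1 * (List.ofFn fun j => B (f j)).prod)).trace := t2.symm
      _ = (Φ (X * Y) * Φ 1 * (List.ofFn fun j => B (f j)).prod).trace := by
          rw [Matrix.mul_assoc]
  have hle : Submodule.span ℂ {M : Matrix (Fin Db) (Fin Db) ℂ |
      ∃ f : Fin (m+1) → Fin d, M = (List.ofFn fun j => B (f j)).prod} ≤ LinearMap.ker ℓ :=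
    Submodule.span_le.2 fun N hN => LinearMap.mem_ker.2 (hgen N hN)
  intro N
  have hN : ℓ N = 0 := hle ((span_prods hBspan m).symm ▸ Submodule.mem_top)
  have : ((Φ X * Φ Y - Φ (X * Y) * Φ 1) * N).trace = 0 := by simpa [hℓ] using hN
  rw [sub_mul, Matrix.trace_sub, sub_eq_zero] at this
  exact this
end Aux

lemma sum_smul_mulVec {p q : ℕ} {ι : Type*} (s : Finset ι) (c : ι → ℂ)
    (M : ι → Matrix (Fin p) (Fin q) ℂ) (v : Fin q → ℂ) :
    (∑ k ∈ s, c k • M k) *ᵥ v = ∑ k ∈ s, c k • (M k *ᵥ v) := by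
  induction s using Finset.cons_induction with
  | empty => simp [Matrix.zero_mulVec]
  | cons a s ha ih =>
    rw [Finset.sum_cons, Finset.sum_cons, Matrix.add_mulVec, ih,
      Matrix.smul_mulVec]

/-- Fundamental theorem for translationally invariant injective MPS on
`n ≥ 3` sites. -/
theorem fundamental_theorem_TI_injective_MPS (n d D D' : ℕ) (hn : 3 ≤ n)
    (A : Fin d → Matrix (Fin D) (Fin D) ℂ) (B : Fin d → Matrix (Fin D') (Fin D') ℂ)
    (hA : Function.Injective fun X : Matrix (Fin D) (Fin D) ℂ =>
      fun i : Fin d => (A i * Xᵀ).trace)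
    (hB : Function.Injective fun X : Matrix (Fin D') (Fin D') ℂ =>
      fun i : Fin d => (B i * Xᵀ).trace)
    (hstate : ∀ i : Fin n → Fin d,
      ((List.ofFn fun k => A (i k)).prod).trace = ((List.ofFn fun k => B (i k)).prod).trace) :
    D = D' ∧
    ∃ (Z : Matrix (Fin D) (Fin D') ℂ) (W : Matrix (Fin D') (Fin D) ℂ) (lam : ℂ),
      Z * W = 1 ∧ W * Z = 1 ∧ lam ^ n = 1 ∧
      (∀ i, B i = lam • (W * A i * Z)) ∧
      ∀ (Z' : Matrix (Fin D) (Fin D') ℂ) (W' : Matrix (Fin D') (Fin D) ℂ) (lam' : ℂ),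
        Z' * W' = 1 → W' * Z' = 1 → lam' ^ n = 1 →
        (∀ i, B i = lam' • (W' * A i * Z')) →
        ∃ c : ℂ, c ≠ 0 ∧ Z' = c • Z := by
  obtain ⟨m, rfl⟩ : ∃ m, n = m + 3 := ⟨n - 3, by omega⟩
  have hAspan := span_eq_top_of_inj hA
  have hBspan := span_eq_top_of_inj hB
  obtain ⟨Φ, hΦ⟩ := exists_phi A B hAspan hBspan hstate
  obtain ⟨Φ', hΦ'⟩ := exists_phi B A hBspan hAspan (fun i => (hstate i).symm)
  have hΦΦ' : Φ' ∘ₗ Φ = LinearMap.id := by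
    apply LinearMap.ext_on hAspan
    rintro x ⟨i, rfl⟩
    simp [hΦ, hΦ']
  have hΦ'Φ : Φ ∘ₗ Φ' = LinearMap.id := by
    apply LinearMap.ext_on hBspan
    rintro x ⟨i, rfl⟩
    simp [hΦ, hΦ']
  have hdim : D = D' := by
    have hfr := (LinearEquiv.ofLinear Φ Φ' hΦ'Φ hΦΦ').finrank_eq
    rw [Module.finrank_matrix, Module.finrank_matrix] at hfr
    simp only [Fintype.card_fin, Module.finrank_self, mul_one] at hfr
    exact Nat.mul_self_inj.mp hfr
  subst hdim
  refine ⟨rfl, ?_⟩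
  rcases Nat.eq_zero_or_pos D with hD | hD
  · subst hD
    have hsub : ∀ M N : Matrix (Fin 0) (Fin 0) ℂ, M = N := fun M N => by
      ext a b; exact a.elim0
    exact ⟨1, 1, 1, hsub _ _, hsub _ _, one_pow _, fun i => hsub _ _,
      fun Z' W' lam' _ _ _ _ => ⟨1, one_ne_zero, hsub _ _⟩⟩
  have tid := trace_identity A B Φ hAspan hΦ hstate
  have hmul := phi_mul A B Φ hBspan hΦ tid
  have hsurj : ∀ X, Φ (Φ' X) = X := fun X => LinearMap.congr_fun hΦ'Φ X
  have hΦinj : ∀ X, Φ' (Φ X) = X := fun X => LinearMap.congr_fun hΦΦ' X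
  have hcomm : ∀ X, X * Φ 1 = Φ 1 * X := by
    intro X
    have h1 := hmul 1 (Φ' X)
    rw [one_mul, hsurj] at h1
    exact h1.symm
  obtain ⟨μ, hμ⟩ := central_scalar (Φ 1) hcomm
  have hDC : ((D : ℂ)) ≠ 0 := Nat.cast_ne_zero.2 (by omega)
  have hμn : μ ^ (m + 3) = 1 := by
    have htr := tid (fun _ => (1 : Matrix (Fin D) (Fin D) ℂ))
    have hl : (List.ofFn fun _ : Fin (m+3) => Φ 1).prod = (Φ 1) ^ (m+3) := by
      rw [List.ofFn_const, List.prod_replicate]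
    have hr : (List.ofFn fun _ : Fin (m+3) => (1 : Matrix (Fin D) (Fin D) ℂ)).prod = 1 := by
      rw [List.ofFn_const, List.prod_replicate, one_pow]
    rw [hl, hr, hμ] at htr
    have hlhs : ((μ • (1 : Matrix (Fin D) (Fin D) ℂ)) ^ (m+3)).trace = μ ^ (m+3) * D := by
      rw [smul_pow, one_pow, Matrix.trace_smul, Matrix.trace_one, smul_eq_mul]
      simp
    rw [hlhs] at htr
    rw [Matrix.trace_one] at htr
    simp only [Fintype.card_fin] at htr
    field_simp at htr
    exact htr
  have hμ0 : μ ≠ 0 := by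
    intro h
    rw [h, zero_pow (by omega)] at hμn
    exact zero_ne_one hμn
  set Ψ : Matrix (Fin D) (Fin D) ℂ →ₗ[ℂ] Matrix (Fin D) (Fin D) ℂ := μ⁻¹ • Φ with hΨdef
  have hΨ : ∀ X, Ψ X = μ⁻¹ • Φ X := fun X => rfl
  have hΨmul : ∀ X Y, Ψ X * Ψ Y = Ψ (X * Y) := by
    intro X Y
    rw [hΨ, hΨ, hΨ, Matrix.smul_mul, Matrix.mul_smul, hmul X Y, hμ, Matrix.mul_smul,
      Matrix.mul_one, smul_smul, smul_smul]
    congr 1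
    field_simp
  have hΦΨ : ∀ X, Φ X = μ • Ψ X := by
    intro X
    rw [hΨ, smul_smul, mul_inv_cancel₀ hμ0, one_smul]
  have hΨinj : ∀ X, Ψ X = 0 → X = 0 := by
    intro X h
    have hφ0 : Φ X = 0 := by rw [hΦΨ, h, smul_zero]
    rw [← hΦinj X, hφ0, map_zero]
  set e0 : Fin D := ⟨0, hD⟩ with he0
  set E : Fin D → Matrix (Fin D) (Fin D) ℂ := fun j => Matrix.single j e0 1 with hE
  set E' : Fin D → Matrix (Fin D) (Fin D) ℂ := fun k => Matrix.single e0 k 1 with hE'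
  have hE0 : Ψ (E e0) ≠ 0 := by
    intro h
    have h2 := hΨinj _ h
    have h3 := congrFun (congrFun h2 e0) e0
    simp [hE, Matrix.single] at h3
  obtain ⟨a, b, hab⟩ : ∃ a b, Ψ (E e0) a b ≠ 0 := by
    by_contra h
    push_neg at h
    exact hE0 (by ext r c; simpa using h r c)
  set v : Fin D → ℂ := Pi.single b 1 with hv
  set w : Fin D → ℂ := (Ψ (E e0)) *ᵥ v with hw
  have hwa : w a ≠ 0 := by
    rw [hw, hv]
    simpa [Matrix.mulVec_single] using hab
  set W : Matrix (Fin D) (Fin D) ℂ := Matrix.of fun r j => ((Ψ (E j)) *ᵥ v) r with hWdef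
  have hXE : ∀ (X : Matrix (Fin D) (Fin D) ℂ) j, X * E j = ∑ k, X k j • E k := by
    intro X j
    ext r c
    simp [hE, Matrix.mul_apply, Matrix.single, ite_and, Matrix.sum_apply,
      Finset.sum_ite_eq, Finset.sum_ite_eq', mul_ite]
  have hint : ∀ X, Ψ X * W = W * X := by
    intro X
    ext r j
    have step1 : (Ψ X * W) r j = ((Ψ X * Ψ (E j)) *ᵥ v) r := by
      rw [← Matrix.mulVec_mulVec]
      simp [Matrix.mul_apply, Matrix.mulVec, dotProduct, hWdef]
    rw [step1, hΨmul, hXE X j, map_sum]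
    have hms : (∑ k, Ψ (X k j • E k)) = ∑ k, X k j • Ψ (E k) := by
      refine Finset.sum_congr rfl fun k _ => ?_
      rw [_root_.map_smul]
    rw [hms, sum_smul_mulVec]
    simp only [Finset.sum_apply, Pi.smul_apply, smul_eq_mul]
    rw [Matrix.mul_apply]
    refine Finset.sum_congr rfl fun k _ => ?_
    rw [hWdef]
    simp [mul_comm]
  have hWinj0 : ∀ c : Fin D → ℂ, W *ᵥ c = 0 → c = 0 := by
    intro c hc
    have hWc : W *ᵥ c = (Ψ (∑ j, c j • E j)) *ᵥ v := by
      have hms : Ψ (∑ j, c j • E j) = ∑ j, c j • Ψ (E j) := by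
        rw [map_sum]
        exact Finset.sum_congr rfl fun k _ => by rw [_root_.map_smul]
      rw [hms, sum_smul_mulVec]
      ext r
      simp only [Finset.sum_apply, Pi.smul_apply, smul_eq_mul]
      rw [Matrix.mulVec, dotProduct]
      refine Finset.sum_congr rfl fun j _ => ?_
      rw [hWdef]
      simp [mul_comm]
    funext k
    show c k = 0
    have h1 : Ψ (E' k) *ᵥ ((Ψ (∑ j, c j • E j)) *ᵥ v) = 0 := by
      rw [← hWc, hc, Matrix.mulVec_zero]
    rw [Matrix.mulVec_mulVec, hΨmul] at h1
    have hEY : E' k * (∑ j, c j • E j) = c k • E e0 := by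
      rw [Finset.mul_sum]
      have : ∀ j, E' k * (c j • E j) = if k = j then c j • E e0 else 0 := by
        intro j
        rw [mul_smul_comm]
        by_cases hkj : k = j
        · subst hkj
          rw [if_pos rfl]
          simp only [hE, hE']
          rw [Matrix.single_mul_single_same, one_mul]
        · rw [if_neg hkj]
          simp only [hE, hE']
          rw [Matrix.single_mul_single_of_ne (h := hkj), smul_zero]
      simp only [this]
      rw [Finset.sum_ite_eq]
      simp
    rw [hEY, _root_.map_smul, Matrix.smul_mulVec] at h1
    have h2 := congrFun h1 a
    simp only [Pi.smul_apply, smul_eq_mul, Pi.zero_apply] at h2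
    have := mul_eq_zero.mp h2
    rcases this with h | h
    · exact h
    · exact absurd h hwa
  have hWinj : Function.Injective W.mulVec := by
    intro c1 c2 h12
    have h0 := hWinj0 (c1 - c2) (by rw [Matrix.mulVec_sub, h12, sub_self])
    exact sub_eq_zero.mp h0
  have hWunit : IsUnit W := Matrix.mulVec_injective_iff_isUnit.mp hWinj
  have hdet : IsUnit W.det := (Matrix.isUnit_iff_isUnit_det W).mp hWunit
  have hWZ : W * W⁻¹ = 1 := Matrix.mul_nonsing_inv W hdet
  have hZW : W⁻¹ * W = 1 := Matrix.nonsing_inv_mul W hdet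
  have hΨform : ∀ X, Ψ X = W * X * W⁻¹ := by
    intro X
    calc Ψ X = Ψ X * (W * W⁻¹) := by rw [hWZ, Matrix.mul_one]
      _ = (Ψ X * W) * W⁻¹ := by rw [Matrix.mul_assoc]
      _ = (W * X) * W⁻¹ := by rw [hint]
  have hBform : ∀ i, B i = μ • (W * A i * W⁻¹) := by
    intro i
    rw [← hΦ i, hΦΨ, hΨform]
  refine ⟨W⁻¹, W, μ, hZW, hWZ, hμn, hBform, ?_⟩
  intro Z' W' lam' hZ'W' hW'Z' hlam' hB'
  have hagree : ∀ X : Matrix (Fin D) (Fin D) ℂ,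
      lam' • (W' * X * Z') = μ • (W * X * W⁻¹) := by
    have hLL : (lam' • ((LinearMap.mulRight ℂ Z').comp (LinearMap.mulLeft ℂ W'))
          : Matrix (Fin D) (Fin D) ℂ →ₗ[ℂ] Matrix (Fin D) (Fin D) ℂ)
        = μ • ((LinearMap.mulRight ℂ W⁻¹).comp (LinearMap.mulLeft ℂ W)) := by
      apply LinearMap.ext_on hAspan
      rintro x ⟨i, rfl⟩
      simp only [LinearMap.smul_apply, LinearMap.comp_apply, LinearMap.mulLeft_apply,
        LinearMap.mulRight_apply]
      rw [← hB' i, ← hBform i]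
    intro X
    have h5 := LinearMap.congr_fun hLL X
    simpa only [LinearMap.smul_apply, LinearMap.comp_apply, LinearMap.mulLeft_apply,
      LinearMap.mulRight_apply] using h5
  have h1 : lam' • (W' * Z') = μ • (W * W⁻¹) := by
    have := hagree 1
    rwa [Matrix.mul_one, Matrix.mul_one] at this
  rw [hW'Z', hWZ] at h1
  have hlam : lam' = μ := by
    have h2 := congrFun (congrFun h1 e0) e0
    simpa using h2
  subst hlam
  have hagree2 : ∀ X, W' * X * Z' = W * X * W⁻¹ := by
    intro X
    exact smul_right_injective (Matrix (Fin D) (Fin D) ℂ) hμ0 (hagree X)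
  have hG : ∀ X, X * (W⁻¹ * W') = (W⁻¹ * W') * X := by
    intro X
    have h2 := hagree2 X
    have h3 : W⁻¹ * (W' * X * Z') * W' = W⁻¹ * (W * X * W⁻¹) * W' := by rw [h2]
    calc X * (W⁻¹ * W')
        = (W⁻¹ * W) * X * (W⁻¹ * W') := by rw [hZW, Matrix.one_mul]
      _ = W⁻¹ * (W * X * W⁻¹) * W' := by
          simp only [Matrix.mul_assoc]
      _ = W⁻¹ * (W' * X * Z') * W' := h3.symm
      _ = (W⁻¹ * W') * X * (Z' * W') := by simp only [Matrix.mul_assoc]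
      _ = (W⁻¹ * W') * X := by rw [hZ'W', Matrix.mul_one]
  obtain ⟨c, hc⟩ := central_scalar (W⁻¹ * W') hG
  have hc0 : c ≠ 0 := by
    intro h
    rw [h, zero_smul] at hc
    have hW'0 : W' = 0 := by
      calc W' = (W * W⁻¹) * W' := by rw [hWZ, Matrix.one_mul]
        _ = W * (W⁻¹ * W') := by rw [Matrix.mul_assoc]
        _ = 0 := by rw [hc, Matrix.mul_zero]
    rw [hW'0, Matrix.zero_mul] at hW'Z'
    have := congrFun (congrFun hW'Z' e0) e0
    simp at this
  have hW' : W' = c • W := by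
    calc W' = (W * W⁻¹) * W' := by rw [hWZ, Matrix.one_mul]
      _ = W * (W⁻¹ * W') := by rw [Matrix.mul_assoc]
      _ = W * (c • 1) := by rw [hc]
      _ = c • W := by rw [Matrix.mul_smul, Matrix.mul_one]
  have hWZ' : W * Z' = c⁻¹ • 1 := by
    have h4 : (c • W) * Z' = 1 := by rw [← hW', hW'Z']
    rw [Matrix.smul_mul] at h4
    rw [← h4, smul_smul, inv_mul_cancel₀ hc0, one_smul]
  refine ⟨c⁻¹, inv_ne_zero hc0, ?_⟩
  calc Z' = (W⁻¹ * W) * Z' := by rw [hZW, Matrix.one_mul]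
    _ = W⁻¹ * (W * Z') := by rw [Matrix.mul_assoc]
    _ = W⁻¹ * (c⁻¹ • 1) := by rw [hWZ']
    _ = c⁻¹ • W⁻¹ := by rw [Matrix.mul_smul, Matrix.mul_one]
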